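/- Let (p*_1,…,p*_κ) with 0 ≤ p*_1 ≤ … ≤ p*_κ be an optimal solution to the monotone price-setting subproblem. Let q_1 < q_2 < … < q_L with L ≤ κ be the distinct price levels, i.e., {p*_1,…,p*_κ} = {q_1,…,q_L}, and for l ∈ {1,…,L} set I_l = {k ∈ {1,…,κ} : p*_k = q_l}. Then for every l ∈ {1,…,L} with ⋃_{k∈I_l} D_k ≠ ∅, the price level q_l is a weighted median of the pooled values (r_d) with weights (t_d) over d ∈ ⋃_{k∈I_l} D_k. -/
import Mathlib


open scoped Classical

/-- `p` is a weighted median of the values `r d` with weights `t d` over `d ∈ D`. -/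
def IsWeightedMedian {ι : Type*} (D : Finset ι) (r : ι → ℝ) (t : ι → ℕ) (p : ℝ) : Prop :=
  (∑ d ∈ D.filter (fun d => r d < p), (t d : ℝ)) ≤ (∑ d ∈ D, (t d : ℝ)) / 2 ∧
    (∑ d ∈ D.filter (fun d => p < r d), (t d : ℝ)) ≤ (∑ d ∈ D, (t d : ℝ)) / 2

/-- Objective of the price-setting subproblem. -/
noncomputable def psObj {ι : Type*} (κ : ℕ) (Dk : Fin κ → Finset ι) (r : ι → ℝ)
    (t : ι → ℕ) (p : Fin κ → ℝ) : ℝ :=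
  ∑ k : Fin κ, ∑ d ∈ Dk k, (t d : ℝ) * |r d - p k|

/-- Updating all prices at level `v` to `c` changes the objective by swapping the
pooled absolute deviations at `v` for those at `c`. -/
lemma psObj_level_update {ι : Type*} (κ : ℕ) (Dk : Fin κ → Finset ι) (r : ι → ℝ)
    (t : ι → ℕ) (hdisj : ∀ k k' : Fin κ, k ≠ k' → Disjoint (Dk k) (Dk k'))
    (p : Fin κ → ℝ) (v c : ℝ) :
    psObj κ Dk r t (fun k => if p k = v then c else p k)
      + ∑ d ∈ (Finset.univ.filter (fun k => p k = v)).biUnion Dk, (t d : ℝ) * |r d - v|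
    = psObj κ Dk r t p
      + ∑ d ∈ (Finset.univ.filter (fun k => p k = v)).biUnion Dk, (t d : ℝ) * |r d - c| := by
  classical
  have hpd : Set.PairwiseDisjoint
      ((Finset.univ.filter (fun k => p k = v)) : Set (Fin κ)) Dk := by
    intro k _ k' _ h
    exact hdisj k k' h
  rw [Finset.sum_biUnion hpd, Finset.sum_biUnion hpd]
  unfold psObj
  rw [← Finset.sum_filter_add_sum_filter_not Finset.univ (fun k => p k = v)
      (fun k => ∑ d ∈ Dk k, (t d : ℝ) * |r d - (if p k = v then c else p k)|),
    ← Finset.sum_filter_add_sum_filter_not Finset.univ (fun k => p k = v)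
      (fun k => ∑ d ∈ Dk k, (t d : ℝ) * |r d - p k|)]
  have h1 : ∑ k ∈ Finset.univ.filter (fun k => p k = v),
      ∑ d ∈ Dk k, (t d : ℝ) * |r d - (if p k = v then c else p k)|
      = ∑ k ∈ Finset.univ.filter (fun k => p k = v),
      ∑ d ∈ Dk k, (t d : ℝ) * |r d - c| := by
    refine Finset.sum_congr rfl (fun k hk => ?_)
    simp [(Finset.mem_filter.mp hk).2]
  have h2 : ∑ k ∈ Finset.univ.filter (fun k => ¬ p k = v),
      ∑ d ∈ Dk k, (t d : ℝ) * |r d - (if p k = v then c else p k)|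
      = ∑ k ∈ Finset.univ.filter (fun k => ¬ p k = v),
      ∑ d ∈ Dk k, (t d : ℝ) * |r d - p k| := by
    refine Finset.sum_congr rfl (fun k hk => ?_)
    simp [(Finset.mem_filter.mp hk).2]
  have h3 : ∑ k ∈ Finset.univ.filter (fun k => p k = v),
      ∑ d ∈ Dk k, (t d : ℝ) * |r d - p k|
      = ∑ k ∈ Finset.univ.filter (fun k => p k = v),
      ∑ d ∈ Dk k, (t d : ℝ) * |r d - v| := by
    refine Finset.sum_congr rfl (fun k hk => ?_)
    rw [(Finset.mem_filter.mp hk).2]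
  rw [h1, h2, h3]
  ring

/-- For an optimal solution to the monotone price-setting subproblem with distinct price
levels `q 0 < … < q (L-1)`, each price level is a weighted median of the pooled reference
prices of the levels `I_l = {k : p k = q l}` it is used for. -/
theorem monotone_price_setting_levels_weighted_medians {ι : Type*} (κ : ℕ)
    (Dk : Fin κ → Finset ι) (r : ι → ℝ) (t : ι → ℕ)
    (hr : ∀ k, ∀ d ∈ Dk k, 0 ≤ r d) (ht : ∀ k, ∀ d ∈ Dk k, 1 ≤ t d)
    (hdisj : ∀ k k' : Fin κ, k ≠ k' → Disjoint (Dk k) (Dk k'))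
    (p : Fin κ → ℝ) (hp0 : ∀ k, 0 ≤ p k) (hmono : Monotone p)
    (hopt : ∀ q : Fin κ → ℝ, (∀ k, 0 ≤ q k) → Monotone q →
      psObj κ Dk r t p ≤ psObj κ Dk r t q)
    (L : ℕ) (hL : L ≤ κ) (q : Fin L → ℝ) (hq : StrictMono q)
    (hrange : Set.range p = Set.range q) :
    ∀ l : Fin L, ((Finset.univ.filter (fun k => p k = q l)).biUnion Dk).Nonempty →
      IsWeightedMedian ((Finset.univ.filter (fun k => p k = q l)).biUnion Dk) r t (q l) := by
  intro l hne
  classical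
  set D := (Finset.univ.filter (fun k => p k = q l)).biUnion Dk with hDdef
  have hrD : ∀ d ∈ D, 0 ≤ r d := by
    intro d hd
    obtain ⟨k, hk, hdk⟩ := Finset.mem_biUnion.mp hd
    exact hr k d hdk
  -- q l is attained by some p k₀, hence nonnegative
  obtain ⟨d0, hd0⟩ := hne
  obtain ⟨k0, hk0I, _⟩ := Finset.mem_biUnion.mp hd0
  have hk0 : p k0 = q l := (Finset.mem_filter.mp hk0I).2
  have hql0 : 0 ≤ q l := hk0 ▸ hp0 k0
  set S := ∑ d ∈ D, (t d : ℝ) with hSdef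
  have hS0 : 0 ≤ S := Finset.sum_nonneg (fun d _ => by positivity)
  constructor
  · -- lower side: weight of {r d < q l} is at most S/2
    by_contra hA
    push_neg at hA
    set A := ∑ d ∈ D.filter (fun d => r d < q l), (t d : ℝ) with hAdef
    have hAne : (D.filter (fun d => r d < q l)).Nonempty := by
      by_contra h
      rw [Finset.not_nonempty_iff_eq_empty] at h
      rw [hAdef, h, Finset.sum_empty] at hA
      linarith
    -- choose a small positive ε
    set F := ((D.filter (fun d => r d < q l)).image (fun d => q l - r d)) ∪
      ((Finset.univ.filter (fun k => p k < q l)).image (fun k => q l - p k)) with hFdef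
    have hFne : F.Nonempty := Finset.Nonempty.inl (hAne.image _)
    set ε := F.min' hFne with hεdef
    have hεpos : 0 < ε := by
      have hm : ε ∈ F := F.min'_mem hFne
      rw [hFdef] at hm
      rcases Finset.mem_union.mp hm with h | h
      · obtain ⟨d, hd, hdq⟩ := Finset.mem_image.mp h
        have := (Finset.mem_filter.mp hd).2
        linarith [hdq, this]
      · obtain ⟨k, hk, hkq⟩ := Finset.mem_image.mp h
        have := (Finset.mem_filter.mp hk).2
        linarith [hkq, this]
    have hεd : ∀ d ∈ D, r d < q l → ε ≤ q l - r d := by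
      intro d hd hdr
      exact Finset.min'_le F _ (Finset.mem_union_left _
        (Finset.mem_image.mpr ⟨d, Finset.mem_filter.mpr ⟨hd, hdr⟩, rfl⟩))
    have hεk : ∀ k : Fin κ, p k < q l → ε ≤ q l - p k := by
      intro k hkq
      exact Finset.min'_le F _ (Finset.mem_union_right _
        (Finset.mem_image.mpr ⟨k, Finset.mem_filter.mpr ⟨Finset.mem_univ k, hkq⟩, rfl⟩))
    obtain ⟨d1, hd1⟩ := hAne
    have hd1D := Finset.mem_filter.mp hd1
    have hεql : ε ≤ q l := by
      have h1 := hεd d1 hd1D.1 hd1D.2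
      have h2 := hrD d1 hd1D.1
      linarith
    -- perturbed price vector
    set p' := fun k => if p k = q l then q l - ε else p k with hp'def
    have hp'0 : ∀ k, 0 ≤ p' k := by
      intro k
      simp only [hp'def]
      split
      · have h1 := hεd d1 hd1D.1 hd1D.2
        have h2 := hrD d1 hd1D.1
        linarith
      · exact hp0 k
    have hmono' : Monotone p' := by
      intro a b hab
      have hab' : p a ≤ p b := hmono hab
      simp only [hp'def]
      by_cases ha : p a = q l <;> by_cases hb : p b = q l <;> simp [ha, hb]
      · have : q l ≤ p b := ha ▸ hab'
        linarith
      · have h1 : p a < q l := lt_of_le_of_ne (hb ▸ hab') ha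
        have := hεk a h1
        linarith
      · exact hab'
    -- pointwise change of the objective on the pooled set
    have hkey : ∑ d ∈ D, (t d : ℝ) * |r d - (q l - ε)| < ∑ d ∈ D, (t d : ℝ) * |r d - q l| := by
      have hpt : ∀ d ∈ D, (t d : ℝ) * |r d - (q l - ε)|
          = (t d : ℝ) * |r d - q l| + (t d : ℝ) * (if r d < q l then -ε else ε) := by
        intro d hd
        by_cases h : r d < q l
        · have h1 := hεd d hd h
          rw [if_pos h, abs_of_nonpos (by linarith), abs_of_nonpos (by linarith)]
          ring
        · push_neg at h
          rw [if_neg (not_lt.mpr h), abs_of_nonneg (by linarith), abs_of_nonneg (by linarith)]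
          ring
      rw [Finset.sum_congr rfl hpt, Finset.sum_add_distrib]
      have e1 : ∑ d ∈ D.filter (fun d => r d < q l),
          (t d : ℝ) * (if r d < q l then -ε else ε) = A * (-ε) := by
        rw [hAdef, Finset.sum_mul]
        refine Finset.sum_congr rfl (fun d hd => ?_)
        rw [if_pos (Finset.mem_filter.mp hd).2]
      have e2 : ∑ d ∈ D.filter (fun d => ¬ r d < q l),
          (t d : ℝ) * (if r d < q l then -ε else ε)
          = (∑ d ∈ D.filter (fun d => ¬ r d < q l), (t d : ℝ)) * ε := by
        rw [Finset.sum_mul]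
        refine Finset.sum_congr rfl (fun d hd => ?_)
        rw [if_neg (Finset.mem_filter.mp hd).2]
      have e3 : A + ∑ d ∈ D.filter (fun d => ¬ r d < q l), (t d : ℝ) = S := by
        rw [hAdef, hSdef]
        exact Finset.sum_filter_add_sum_filter_not D _ _
      have e4 : ∑ d ∈ D, (t d : ℝ) * (if r d < q l then -ε else ε)
          = A * (-ε) + (∑ d ∈ D.filter (fun d => ¬ r d < q l), (t d : ℝ)) * ε := by
        rw [← e1, ← e2]
        exact (Finset.sum_filter_add_sum_filter_not D _ _).symm
      rw [e4]
      nlinarith [hεpos, hA, e3]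
    have hle := hopt p' hp'0 hmono'
    have hobj := psObj_level_update κ Dk r t hdisj p (q l) (q l - ε)
    rw [← hDdef, ← hp'def] at hobj
    linarith
  · -- upper side: weight of {q l < r d} is at most S/2
    by_contra hB
    push_neg at hB
    set B := ∑ d ∈ D.filter (fun d => q l < r d), (t d : ℝ) with hBdef
    have hBne : (D.filter (fun d => q l < r d)).Nonempty := by
      by_contra h
      rw [Finset.not_nonempty_iff_eq_empty] at h
      rw [hBdef, h, Finset.sum_empty] at hB
      linarith
    set F := ((D.filter (fun d => q l < r d)).image (fun d => r d - q l)) ∪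
      ((Finset.univ.filter (fun k => q l < p k)).image (fun k => p k - q l)) with hFdef
    have hFne : F.Nonempty := Finset.Nonempty.inl (hBne.image _)
    set ε := F.min' hFne with hεdef
    have hεpos : 0 < ε := by
      have hm : ε ∈ F := F.min'_mem hFne
      rw [hFdef] at hm
      rcases Finset.mem_union.mp hm with h | h
      · obtain ⟨d, hd, hdq⟩ := Finset.mem_image.mp h
        have := (Finset.mem_filter.mp hd).2
        linarith [hdq, this]
      · obtain ⟨k, hk, hkq⟩ := Finset.mem_image.mp h
        have := (Finset.mem_filter.mp hk).2
        linarith [hkq, this]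
    have hεd : ∀ d ∈ D, q l < r d → ε ≤ r d - q l := by
      intro d hd hdr
      exact Finset.min'_le F _ (Finset.mem_union_left _
        (Finset.mem_image.mpr ⟨d, Finset.mem_filter.mpr ⟨hd, hdr⟩, rfl⟩))
    have hεk : ∀ k : Fin κ, q l < p k → ε ≤ p k - q l := by
      intro k hkq
      exact Finset.min'_le F _ (Finset.mem_union_right _
        (Finset.mem_image.mpr ⟨k, Finset.mem_filter.mpr ⟨Finset.mem_univ k, hkq⟩, rfl⟩))
    set p' := fun k => if p k = q l then q l + ε else p k with hp'def
    have hp'0 : ∀ k, 0 ≤ p' k := by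
      intro k
      simp only [hp'def]
      split
      · linarith
      · exact hp0 k
    have hmono' : Monotone p' := by
      intro a b hab
      have hab' : p a ≤ p b := hmono hab
      simp only [hp'def]
      by_cases ha : p a = q l <;> by_cases hb : p b = q l <;> simp [ha, hb]
      · have h1 : q l < p b := lt_of_le_of_ne (ha ▸ hab') (Ne.symm hb)
        have := hεk b h1
        linarith
      · have : p a ≤ q l := hb ▸ hab'
        linarith
      · exact hab'
    have hkey : ∑ d ∈ D, (t d : ℝ) * |r d - (q l + ε)| < ∑ d ∈ D, (t d : ℝ) * |r d - q l| := by
      have hpt : ∀ d ∈ D, (t d : ℝ) * |r d - (q l + ε)|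
          = (t d : ℝ) * |r d - q l| + (t d : ℝ) * (if q l < r d then -ε else ε) := by
        intro d hd
        by_cases h : q l < r d
        · have h1 := hεd d hd h
          rw [if_pos h, abs_of_nonneg (by linarith), abs_of_nonneg (by linarith)]
          ring
        · push_neg at h
          rw [if_neg (not_lt.mpr h), abs_of_nonpos (by linarith), abs_of_nonpos (by linarith)]
          ring
      rw [Finset.sum_congr rfl hpt, Finset.sum_add_distrib]
      have e1 : ∑ d ∈ D.filter (fun d => q l < r d),
          (t d : ℝ) * (if q l < r d then -ε else ε) = B * (-ε) := by
        rw [hBdef, Finset.sum_mul]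
        refine Finset.sum_congr rfl (fun d hd => ?_)
        rw [if_pos (Finset.mem_filter.mp hd).2]
      have e2 : ∑ d ∈ D.filter (fun d => ¬ q l < r d),
          (t d : ℝ) * (if q l < r d then -ε else ε)
          = (∑ d ∈ D.filter (fun d => ¬ q l < r d), (t d : ℝ)) * ε := by
        rw [Finset.sum_mul]
        refine Finset.sum_congr rfl (fun d hd => ?_)
        rw [if_neg (Finset.mem_filter.mp hd).2]
      have e3 : B + ∑ d ∈ D.filter (fun d => ¬ q l < r d), (t d : ℝ) = S := by
        rw [hBdef, hSdef]
        exact Finset.sum_filter_add_sum_filter_not D _ _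
      have e4 : ∑ d ∈ D, (t d : ℝ) * (if q l < r d then -ε else ε)
          = B * (-ε) + (∑ d ∈ D.filter (fun d => ¬ q l < r d), (t d : ℝ)) * ε := by
        rw [← e1, ← e2]
        exact (Finset.sum_filter_add_sum_filter_not D _ _).symm
      rw [e4]
      nlinarith [hεpos, hB, e3]
    have hle := hopt p' hp'0 hmono'
    have hobj := psObj_level_update κ Dk r t hdisj p (q l) (q l + ε)
    rw [← hDdef, ← hp'def] at hobj
    linarith
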